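/- Let G₁ and G₂ be simple graphs on nonempty vertex sets V₁ and V₂. Then the complement of the tensor product G₁ × G₂ is connected, where G₁ × G₂ is the simple graph on V₁ × V₂ in which (a,b) and (c,d) are adjacent if and only if a is adjacent to c in G₁ and b is adjacent to d in G₂. -/

import Mathlib

/-- The tensor (direct) product of two simple graphs: `(a, b)` and `(c, d)` are adjacent
iff `a ~ c` in `G₁` and `b ~ d` in `G₂`. -/
def SimpleGraph.tensorProd {V₁ V₂ : Type*} (G₁ : SimpleGraph V₁) (G₂ : SimpleGraph V₂) :
    SimpleGraph (V₁ × V₂) where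
  Adj a b := G₁.Adj a.1 b.1 ∧ G₂.Adj a.2 b.2
  symm := ⟨fun a b ⟨h₁, h₂⟩ => ⟨h₁.symm, h₂.symm⟩⟩
  loopless := ⟨fun a ⟨h₁, _⟩ => G₁.irrefl h₁⟩

theorem stmt_18 {V₁ V₂ : Type*} [Nonempty V₁] [Nonempty V₂]
    (G₁ : SimpleGraph V₁) (G₂ : SimpleGraph V₂) :
    (G₁.tensorProd G₂)ᶜ.Connected := by
  rw [SimpleGraph.connected_iff]
  refine ⟨fun u v => ?_, inferInstance⟩
  obtain ⟨a, b⟩ := u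
  obtain ⟨c, d⟩ := v
  have step1 : ∀ (x : V₁) (y y' : V₂), y ≠ y' →
      (G₁.tensorProd G₂)ᶜ.Adj (x, y) (x, y') := by
    intro x y y' h
    refine ⟨by simp [Prod.ext_iff, h], fun h => G₁.irrefl (show G₁.Adj x x ∧ G₂.Adj y y' from h).1⟩
  have step2 : ∀ (x x' : V₁) (y : V₂), x ≠ x' →
      (G₁.tensorProd G₂)ᶜ.Adj (x, y) (x', y) := by
    intro x x' y h
    refine ⟨by simp [Prod.ext_iff, h], fun h => G₂.irrefl (show G₁.Adj x x' ∧ G₂.Adj y y from h).2⟩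
  by_cases hac : a = c
  · subst hac
    by_cases hbd : b = d
    · subst hbd
      exact SimpleGraph.Reachable.refl _
    · exact (step1 a b d hbd).reachable
  · by_cases hbd : b = d
    · subst hbd
      exact (step2 a c b hac).reachable
    · exact (step1 a b d hbd).reachable.trans (step2 a c d hac).reachable
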